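/- Let π₅ = 1 + 2i in ℤ[i] and let n be an odd positive integer. Then the highest power of 2 dividing the norm N(π₅ⁿ + 1) is 2³; that is, 8 divides N(π₅ⁿ + 1) but 16 does not. -/
import Mathlib

lemma pi_pow_odd_form (k : ℕ) :
    ∃ a b : ℤ, (⟨1, 2⟩ : GaussianInt) ^ (2 * k + 1) = ⟨1 + 4 * a, 2 + 4 * b⟩ := by
  induction k with
  | zero => exact ⟨0, 0, by norm_num⟩
  | succ k ih =>
    obtain ⟨a, b, h⟩ := ih
    refine ⟨-3 - 3 * a - 4 * b, -1 + 4 * a - 3 * b, ?_⟩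
    have : 2 * (k + 1) + 1 = (2 * k + 1) + 2 := by ring
    rw [this, pow_add, h]
    ext <;> simp [pow_two, Zsqrtd.re_mul, Zsqrtd.im_mul] <;> ring

theorem norm_pi_pow_add_one_odd (n : ℕ) (hn : 0 < n) (hodd : Odd n) :
    (8 : ℤ) ∣ Zsqrtd.norm ((⟨1, 2⟩ : GaussianInt) ^ n + 1) ∧
      ¬ (16 : ℤ) ∣ Zsqrtd.norm ((⟨1, 2⟩ : GaussianInt) ^ n + 1) := by
  obtain ⟨k, hk⟩ := hodd
  obtain ⟨a, b, h⟩ := pi_pow_odd_form k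
  have hn' : n = 2 * k + 1 := by omega
  rw [hn', h]
  have hnorm : Zsqrtd.norm ((⟨1 + 4 * a, 2 + 4 * b⟩ : GaussianInt) + 1)
      = 8 + 16 * (a + a * a + b + b * b) := by
    simp [Zsqrtd.norm, Zsqrtd.ext_iff, Zsqrtd.add_def]
    ring
  rw [hnorm]
  constructor
  · exact ⟨1 + 2 * (a + a * a + b + b * b), by ring⟩
  · rintro ⟨m, hm⟩
    omega
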